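/- Let C₁, C₂, C₄ ≥ 0, θ_c > 0, and let c ∈ ℝ with |c| ≤ C₄. Let a : (0, ∞) → ℝ be three times differentiable with |a''(θ)| ≤ C₂ / max(θ, 1)² and |a'''(θ)| ≤ C₂ / max(θ, 1) for every θ > 0, and define w(θ) := a(θ) c + C₁ θ (1 − log θ) and w^{in}(θ) := w(θ) − θ w'(θ). Assume C₁ ≥ (1 + 4θ_c) C₂ C₄. Then for every θ > 0 one has |(w^{in})''(θ)| ≤ (−θ w''(θ)) / (2 θ_c). -/

import Mathlib

/-- Shape-memory-alloy condition (C.10): with `|c| ≤ C₄`, `a` three times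
differentiable on `(0,∞)` with `|a''(θ)| ≤ C₂ / max(θ,1)²` and
`|a'''(θ)| ≤ C₂ / max(θ,1)`, `w(θ) = a(θ) c + C₁ θ (1 − log θ)`,
`w^{in}(θ) = w(θ) − θ w'(θ)`, and `C₁ ≥ (1 + 4θ_c) C₂ C₄`, one has
`|(w^{in})''(θ)| ≤ (−θ w''(θ)) / (2 θ_c)` for every `θ > 0`. -/
theorem internal_energy_vs_heat_capacity (C₁ C₂ C₄ θc : ℝ) (hC₁ : 0 ≤ C₁)
    (hC₂ : 0 ≤ C₂) (hC₄ : 0 ≤ C₄) (hθc : 0 < θc) (c : ℝ) (hc : |c| ≤ C₄)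
    (a a' a'' a''' : ℝ → ℝ)
    (ha' : ∀ θ : ℝ, 0 < θ → HasDerivAt a (a' θ) θ)
    (ha'' : ∀ θ : ℝ, 0 < θ → HasDerivAt a' (a'' θ) θ)
    (ha''' : ∀ θ : ℝ, 0 < θ → HasDerivAt a'' (a''' θ) θ)
    (ha''bd : ∀ θ : ℝ, 0 < θ → |a'' θ| ≤ C₂ / (max θ 1) ^ 2)
    (ha'''bd : ∀ θ : ℝ, 0 < θ → |a''' θ| ≤ C₂ / max θ 1)
    (hC₁big : (1 + 4 * θc) * C₂ * C₄ ≤ C₁)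
    (w w' w'' : ℝ → ℝ) (hw : ∀ θ : ℝ, w θ = a θ * c + C₁ * θ * (1 - Real.log θ))
    (hw' : ∀ θ : ℝ, 0 < θ → HasDerivAt w (w' θ) θ)
    (hw'' : ∀ θ : ℝ, 0 < θ → HasDerivAt w' (w'' θ) θ)
    (win win' win'' : ℝ → ℝ) (hwin : ∀ θ : ℝ, win θ = w θ - θ * w' θ)
    (hwin' : ∀ θ : ℝ, 0 < θ → HasDerivAt win (win' θ) θ)
    (hwin'' : ∀ θ : ℝ, 0 < θ → HasDerivAt win' (win'' θ) θ) :
    ∀ θ : ℝ, 0 < θ → |win'' θ| ≤ (-θ * w'' θ) / (2 * θc) := by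
  -- Step 1: identify w'
  have hw'eq : ∀ θ : ℝ, 0 < θ → w' θ = a' θ * c - C₁ * Real.log θ := by
    intro θ hθ
    have h1 := ((ha' θ hθ).mul_const c).add
      (((hasDerivAt_id θ).mul ((hasDerivAt_const θ (1:ℝ)).sub
        (Real.hasDerivAt_log hθ.ne'))).const_mul C₁)
    have h2 := h1.congr_of_eventuallyEq (f₁ := w) (by
      filter_upwards with t
      rw [hw t]; simp only [Pi.add_apply, Pi.mul_apply, Pi.sub_apply, id]; ring)
    have := (hw' θ hθ).unique h2
    rw [this]; simp only [id, Pi.sub_apply]; field_simp; ring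
  -- Step 2: identify w''
  have hw''eq : ∀ θ : ℝ, 0 < θ → w'' θ = a'' θ * c - C₁ / θ := by
    intro θ hθ
    have h1 := ((ha'' θ hθ).mul_const c).sub
      ((Real.hasDerivAt_log hθ.ne').const_mul C₁)
    have h2 := h1.congr_of_eventuallyEq (f₁ := w') (by
      filter_upwards [Ioi_mem_nhds hθ] with t ht
      exact hw'eq t ht)
    have := (hw'' θ hθ).unique h2
    rw [this]; field_simp
  -- Step 3: identify win'
  have hwin'eq : ∀ θ : ℝ, 0 < θ → win' θ = -(θ * w'' θ) := by
    intro θ hθ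
    have h1 := (hw' θ hθ).sub ((hasDerivAt_id θ).mul (hw'' θ hθ))
    have h2 := h1.congr_of_eventuallyEq (f₁ := win) (by
      filter_upwards with t
      rw [hwin t]; simp only [Pi.sub_apply, Pi.mul_apply, id])
    have := (hwin' θ hθ).unique h2
    rw [this]; simp only [id]; ring
  -- Step 4: identify win''
  intro θ hθ
  have hwin''eq : win'' θ = -((a'' θ + θ * a''' θ) * c) := by
    have h1 := (hasDerivAt_const θ C₁).sub
      (((hasDerivAt_id θ).mul (ha''' θ hθ)).mul_const c)
    have h2 := h1.congr_of_eventuallyEq (f₁ := win') (by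
      filter_upwards [Ioi_mem_nhds hθ] with t ht
      have ht' : (0:ℝ) < t := ht
      rw [hwin'eq t ht', hw''eq t ht', mul_sub, mul_div_cancel₀ _ ht'.ne']
      simp only [Pi.sub_apply, Pi.mul_apply, id]; ring)
    have := (hwin'' θ hθ).unique h2
    rw [this]; simp only [id]; ring
  -- Step 5: estimates
  set M := max θ 1 with hM
  have hM1 : (1:ℝ) ≤ M := le_max_right _ _
  have hMθ : θ ≤ M := le_max_left _ _
  have hMpos : (0:ℝ) < M := lt_of_lt_of_le one_pos hM1
  have hM2 : (1:ℝ) ≤ M ^ 2 := by nlinarith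
  have hθM2 : θ ≤ M ^ 2 := by nlinarith
  have hbd2 := ha''bd θ hθ
  have hbd3 := ha'''bd θ hθ
  have h2C : |a'' θ| ≤ C₂ := hbd2.trans (div_le_self hC₂ hM2)
  have h3C : θ * |a''' θ| ≤ C₂ := by
    have h := mul_le_mul_of_nonneg_left hbd3 hθ.le
    refine h.trans ?_
    have hd : θ / M ≤ 1 := (div_le_one hMpos).2 hMθ
    calc θ * (C₂ / M) = C₂ * (θ / M) := by ring
      _ ≤ C₂ * 1 := mul_le_mul_of_nonneg_left hd hC₂
      _ = C₂ := mul_one _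
  have h2C' : θ * |a'' θ| ≤ C₂ := by
    have h := mul_le_mul_of_nonneg_left hbd2 hθ.le
    refine h.trans ?_
    have hd : θ / M ^ 2 ≤ 1 := (div_le_one (by positivity)).2 hθM2
    calc θ * (C₂ / M ^ 2) = C₂ * (θ / M ^ 2) := by ring
      _ ≤ C₂ * 1 := mul_le_mul_of_nonneg_left hd hC₂
      _ = C₂ := mul_one _
  -- LHS bound
  have hLHS : |win'' θ| ≤ 2 * C₂ * C₄ := by
    rw [hwin''eq, abs_neg, abs_mul]
    have htri : |a'' θ + θ * a''' θ| ≤ |a'' θ| + θ * |a''' θ| := by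
      refine (abs_add_le _ _).trans ?_
      rw [abs_mul, abs_of_pos hθ]
    calc |a'' θ + θ * a''' θ| * |c| ≤ (|a'' θ| + θ * |a''' θ|) * |c| :=
          mul_le_mul_of_nonneg_right htri (abs_nonneg _)
      _ ≤ (C₂ + C₂) * C₄ := by
          apply mul_le_mul (by linarith) hc (abs_nonneg _)
            (by linarith [abs_nonneg (a'' θ), mul_nonneg hθ.le (abs_nonneg (a''' θ))])
      _ = 2 * C₂ * C₄ := by ring
  -- RHS bound
  have hRHS : 2 * θc * (2 * C₂ * C₄) ≤ -θ * w'' θ := by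
    rw [hw''eq θ hθ]
    have h1 : -θ * (a'' θ * c - C₁ / θ) = C₁ - θ * (a'' θ * c) := by
      field_simp; ring
    rw [h1]
    have h2 : θ * (a'' θ * c) ≤ C₂ * C₄ := by
      calc θ * (a'' θ * c) ≤ |θ * (a'' θ * c)| := le_abs_self _
        _ = θ * |a'' θ| * |c| := by rw [abs_mul, abs_mul, abs_of_pos hθ, mul_assoc]
        _ ≤ C₂ * C₄ := mul_le_mul h2C' hc (abs_nonneg _) hC₂
    nlinarith
  rw [le_div_iff₀ (by positivity)]
  calc |win'' θ| * (2 * θc) ≤ 2 * C₂ * C₄ * (2 * θc) :=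
        mul_le_mul_of_nonneg_right hLHS (by positivity)
    _ ≤ -θ * w'' θ := by linarith
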